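/- A 2×(m+1) matrix A with entries in {±1,…,±n} and distinct columns is invalid if and only if (1) one of its rows contains both α and −α for some α ∈ {1,…,n}, or (2) A contains a circuit or an anti-circuit. -/

import Mathlib

/-- The vector in `ℝⁿ` corresponding to an entry `a = s·I` with `s ∈ {±1}`,
`I ∈ {1,…,n}`: the signed standard basis vector `s • e_I`. -/
def entryVec (n : ℕ) (a : ℤ) : EuclideanSpace ℝ (Fin n) :=
  WithLp.toLp 2 (fun i : Fin n => if ((i : ℕ) : ℤ) + 1 = a then 1 else if ((i : ℕ) : ℤ) + 1 = -a then -1 else 0)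

/-- The `j`-th column of the induced matrix `M(A,b)` of a `2 × (m+1)` matrix `A` with
entries in `{±1,…,±n}` and `b ∈ ℝ²`. -/
noncomputable def inducedCol (n m : ℕ) (A : Fin 2 → Fin (m + 1) → ℤ) (b : Fin 2 → ℝ) :
    Fin (m + 1) → EuclideanSpace ℝ (Fin n) :=
  fun j => b 0 • entryVec n (A 0 j) + b 1 • entryVec n (A 1 j)

/-- `A` is valid if for every nonzero `b ∈ ℝ²` the convex hull of the columns of the
induced matrix `M(A,b)` does not contain the origin. -/
def IsValid (n m : ℕ) (A : Fin 2 → Fin (m + 1) → ℤ) : Prop :=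
  ∀ b : Fin 2 → ℝ, b ≠ 0 →
    (0 : EuclideanSpace ℝ (Fin n)) ∉ convexHull ℝ (Set.range (inducedCol n m A b))

/-- A circuit in a `k × (m+1)` matrix: distinct rows `i₀, i₁` and distinct columns
`j₁,…,j_p` with `a_{i₁,j_α} = a_{i₀,j_{α+1}}` cyclically. -/
def HasCircuit {k m : ℕ} (A : Fin k → Fin (m + 1) → ℤ) : Prop :=
  ∃ i₀ i₁ : Fin k, i₀ ≠ i₁ ∧ ∃ p : ℕ, ∃ j : Fin (p + 1) → Fin (m + 1),
    Function.Injective j ∧ ∀ α, A i₁ (j α) = A i₀ (j (α + 1))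

/-- An anti-circuit: as a circuit, but with `a_{i₁,j_α} = −a_{i₀,j_{α+1}}` cyclically. -/
def HasAntiCircuit {k m : ℕ} (A : Fin k → Fin (m + 1) → ℤ) : Prop :=
  ∃ i₀ i₁ : Fin k, i₀ ≠ i₁ ∧ ∃ p : ℕ, ∃ j : Fin (p + 1) → Fin (m + 1),
    Function.Injective j ∧ ∀ α, A i₁ (j α) = -(A i₀ (j (α + 1)))

/- ### Auxiliary lemmas -/

lemma entryVec_apply (n : ℕ) (a : ℤ) (I : Fin n) :
    entryVec n a I =
      if ((I : ℕ) : ℤ) + 1 = a then 1 else if ((I : ℕ) : ℤ) + 1 = -a then -1 else 0 := rfl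

lemma entryVec_neg_apply (n : ℕ) (a : ℤ) (I : Fin n) :
    entryVec n (-a) I = - entryVec n a I := by
  have hI : (0 : ℤ) ≤ ((I : ℕ) : ℤ) := Int.natCast_nonneg _
  simp only [entryVec_apply, neg_neg]
  split_ifs with h1 h2 h3 <;> first | (exfalso; omega) | norm_num

lemma entryVec_neg (n : ℕ) (a : ℤ) : entryVec n (-a) = - entryVec n a :=
  by ext I; simp only [entryVec_neg_apply, PiLp.neg_apply]

lemma euc_sum_apply {n N : ℕ} (v : Fin N → EuclideanSpace ℝ (Fin n)) (I : Fin n) :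
    (∑ j, v j) I = ∑ j, v j I := by
  have := map_sum (EuclideanSpace.proj I (𝕜 := ℝ)) v Finset.univ
  simpa only [PiLp.proj_apply] using this

lemma sum_shift {E : Type*} [AddCommMonoid E] {p : ℕ} (v : Fin (p + 1) → E) :
    ∑ α, v (α + 1) = ∑ α, v α :=
  Fintype.sum_equiv (Equiv.addRight 1) _ _ (fun _ => rfl)

lemma notValid_of_sum_eq_zero {n m : ℕ} {A : Fin 2 → Fin (m + 1) → ℤ} {b : Fin 2 → ℝ}
    (hb : b ≠ 0) {q : ℕ} (j : Fin (q + 1) → Fin (m + 1))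
    (hsum : ∑ α, inducedCol n m A b (j α) = 0) : ¬ IsValid n m A := by
  intro hV
  refine hV b hb ?_
  refine mem_convexHull_of_exists_fintype (fun _ : Fin (q + 1) => ((q : ℝ) + 1)⁻¹)
    (fun α => inducedCol n m A b (j α)) (fun _ => by positivity) ?_ (fun α => ⟨j α, rfl⟩) ?_
  · rw [Finset.sum_const, Finset.card_univ, Fintype.card_fin, nsmul_eq_mul, Nat.cast_add_one]
    have : ((q : ℝ) + 1) ≠ 0 := by positivity
    field_simp
  · rw [← Finset.smul_sum, hsum, smul_zero]

lemma notValid_row {n m : ℕ} {A : Fin 2 → Fin (m + 1) → ℤ} (i : Fin 2)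
    (j₁ j₂ : Fin (m + 1)) (h : A i j₁ = -(A i j₂)) : ¬ IsValid n m A := by
  fin_cases i
  · have h' : A 0 j₁ = -(A 0 j₂) := h
    refine notValid_of_sum_eq_zero (b := ![1, 0]) ?_ (q := 1) ![j₁, j₂] ?_
    · intro h0
      have := congrFun h0 0
      simp at this
    · show ∑ x : Fin 2, inducedCol n m A ![1, 0] (![j₁, j₂] x) = 0
      rw [Fin.sum_univ_two]
      simp only [inducedCol, Matrix.cons_val_zero, Matrix.cons_val_one, Matrix.head_cons,
        one_smul, zero_smul, add_zero]
      rw [h', entryVec_neg]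
      abel
  · have h' : A 1 j₁ = -(A 1 j₂) := h
    refine notValid_of_sum_eq_zero (b := ![0, 1]) ?_ (q := 1) ![j₁, j₂] ?_
    · intro h0
      have := congrFun h0 1
      simp at this
    · show ∑ x : Fin 2, inducedCol n m A ![0, 1] (![j₁, j₂] x) = 0
      rw [Fin.sum_univ_two]
      simp only [inducedCol, Matrix.cons_val_zero, Matrix.cons_val_one, Matrix.head_cons,
        one_smul, zero_smul, zero_add]
      rw [h', entryVec_neg]
      abel

lemma neg_smul_entryVec {n : ℕ} {c : ℤ} (hc : c = 1 ∨ c = -1) (x : ℤ) :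
    (-(c : ℝ)) • entryVec n (c * x) = - entryVec n x := by
  rcases hc with rfl | rfl
  · simp
  · push_cast
    rw [neg_neg, one_smul]
    rw [show (-1 : ℤ) * x = -x by ring, entryVec_neg]

lemma notValid_cyc {n m : ℕ} {A : Fin 2 → Fin (m + 1) → ℤ} (i₀ i₁ : Fin 2) (hne : i₀ ≠ i₁)
    {c : ℤ} (hc : c = 1 ∨ c = -1) (p : ℕ) (j : Fin (p + 1) → Fin (m + 1))
    (hrel : ∀ α, A i₁ (j α) = c * A i₀ (j (α + 1))) : ¬ IsValid n m A := by
  fin_cases i₀ <;> fin_cases i₁ <;> try exact absurd rfl hne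
  · -- i₀ = 0, i₁ = 1
    have hrel' : ∀ α, A 1 (j α) = c * A 0 (j (α + 1)) := hrel
    refine notValid_of_sum_eq_zero (b := ![1, -(c : ℝ)]) ?_ j ?_
    · intro h0
      have := congrFun h0 0
      simp at this
    · have hcol : ∀ α, inducedCol n m A ![1, -(c : ℝ)] (j α) =
          entryVec n (A 0 (j α)) - entryVec n (A 0 (j (α + 1))) := by
        intro α
        simp only [inducedCol, Matrix.cons_val_zero, Matrix.cons_val_one, Matrix.head_cons,
          one_smul]
        rw [hrel' α, neg_smul_entryVec hc]
        abel
      rw [Finset.sum_congr rfl (fun α _ => hcol α), Finset.sum_sub_distrib]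
      rw [sum_shift (fun α => entryVec n (A 0 (j α)))]
      simp
  · -- i₀ = 1, i₁ = 0
    have hrel' : ∀ α, A 0 (j α) = c * A 1 (j (α + 1)) := hrel
    refine notValid_of_sum_eq_zero (b := ![-(c : ℝ), 1]) ?_ j ?_
    · intro h0
      have := congrFun h0 1
      simp at this
    · have hcol : ∀ α, inducedCol n m A ![-(c : ℝ), 1] (j α) =
          entryVec n (A 1 (j α)) - entryVec n (A 1 (j (α + 1))) := by
        intro α
        simp only [inducedCol, Matrix.cons_val_zero, Matrix.cons_val_one, Matrix.head_cons,
          one_smul]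
        rw [hrel' α, neg_smul_entryVec hc]
        abel
      rw [Finset.sum_congr rfl (fun α _ => hcol α), Finset.sum_sub_distrib]
      rw [sum_shift (fun α => entryVec n (A 1 (j α)))]
      simp


lemma entryVec_sign {n : ℕ} {a : ℤ} {I : Fin n} (ha : a ≠ 0)
    (hI : ((I : ℕ) : ℤ) + 1 = a ∨ ((I : ℕ) : ℤ) + 1 = -a) :
    entryVec n a I = 1 ∨ entryVec n a I = -1 := by
  rw [entryVec_apply]
  rcases hI with h | h
  · rw [if_pos h]; left; rfl
  · rw [if_neg (by omega), if_pos h]; right; rfl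

lemma entryVec_eq_zero {n : ℕ} {a : ℤ} {I : Fin n}
    (ha : ((I : ℕ) : ℤ) + 1 ≠ a) (hb : ((I : ℕ) : ℤ) + 1 ≠ -a) : entryVec n a I = 0 := by
  rw [entryVec_apply, if_neg ha, if_neg hb]

lemma euc_coord {n N : ℕ} {v : Fin N → EuclideanSpace ℝ (Fin n)} {μ : Fin N → ℝ}
    (h : ∑ j, μ j • v j = 0) (I : Fin n) : ∑ j, μ j * v j I = 0 := by
  have h2 : ∑ j, μ j * v j I = EuclideanSpace.proj I (𝕜 := ℝ) (∑ j, μ j • v j) := by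
    rw [map_sum]
    exact Finset.sum_congr rfl fun j _ => by simp [PiLp.proj_apply]
  rw [h2, h, map_zero]

lemma exists_idx {n : ℕ} {a : ℤ} (ha1 : 1 ≤ |a|) (ha2 : |a| ≤ (n : ℤ)) :
    ∃ I : Fin n, (((I : ℕ) : ℤ) + 1 = a ∨ ((I : ℕ) : ℤ) + 1 = -a) := by
  have h3 := Int.natAbs_eq a
  rw [Int.abs_eq_natAbs] at ha1 ha2
  refine ⟨⟨a.natAbs - 1, by omega⟩, ?_⟩
  show ((a.natAbs - 1 : ℕ) : ℤ) + 1 = a ∨ ((a.natAbs - 1 : ℕ) : ℤ) + 1 = -a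
  omega

lemma isValid_of_no_pattern {n m : ℕ} {A : Fin 2 → Fin (m + 1) → ℤ}
    (hA : ∀ i j, 1 ≤ |A i j| ∧ |A i j| ≤ (n : ℤ))
    (hpair : ∀ (i : Fin 2) (j₁ j₂ : Fin (m + 1)), A i j₁ ≠ -(A i j₂))
    (h2 : ¬ HasCircuit A) (h3 : ¬ HasAntiCircuit A) : IsValid n m A := by
  classical
  intro b hb hmem
  rw [mem_convexHull_iff_exists_fintype] at hmem
  obtain ⟨ι, hι, w, z, hw0, hw1, hz, hx⟩ := hmem
  choose g hg using hz
  set μ : Fin (m + 1) → ℝ := fun j => ∑ i ∈ Finset.univ.filter (fun i => g i = j), w i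
    with hμdef
  have hμ0 : ∀ j, 0 ≤ μ j := fun j => Finset.sum_nonneg fun i _ => hw0 i
  have hμ1 : ∑ j, μ j = 1 := by
    rw [← hw1]
    exact Finset.sum_fiberwise_of_maps_to (fun i _ => Finset.mem_univ _) w
  have hμs : ∑ j, μ j • inducedCol n m A b j = 0 := by
    have e1 : ∀ j, μ j • inducedCol n m A b j
        = ∑ i ∈ Finset.univ.filter (fun i => g i = j), w i • z i := by
      intro j
      simp only [hμdef]
      rw [Finset.sum_smul]
      refine Finset.sum_congr rfl fun i hi => ?_
      rw [← hg i, (Finset.mem_filter.mp hi).2]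
    rw [Finset.sum_congr rfl fun j _ => e1 j]
    rw [Finset.sum_fiberwise_of_maps_to (fun i _ => Finset.mem_univ _) (fun i => w i • z i)]
    exact hx
  have hcoord : ∀ I : Fin n,
      b 0 * (∑ j, μ j * entryVec n (A 0 j) I) + b 1 * (∑ j, μ j * entryVec n (A 1 j) I) = 0 := by
    intro I
    have h4 := euc_coord hμs I
    rw [Finset.mul_sum, Finset.mul_sum, ← Finset.sum_add_distrib, ← h4]
    refine Finset.sum_congr rfl fun j _ => ?_
    have hic : inducedCol n m A b j I
        = b 0 * entryVec n (A 0 j) I + b 1 * entryVec n (A 1 j) I := rfl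
    rw [hic]; ring
  set W : Fin 2 → ℤ → ℝ := fun i a => ∑ j, if A i j = a then μ j else 0 with hWdef
  have hWpos : ∀ i j, 0 < μ j → 0 < W i (A i j) := by
    intro i j hj
    have hle : μ j ≤ W i (A i j) := by
      simp only [hWdef]
      have hs := Finset.single_le_sum (f := fun j' => if A i j' = A i j then μ j' else 0)
        (fun j' _ => by split <;> [exact hμ0 j'; exact le_refl 0]) (Finset.mem_univ j)
      simpa using hs
    linarith
  have hL1 : ∀ (i : Fin 2) (a : ℤ) (I : Fin n) (j₀ : Fin (m + 1)), A i j₀ = a →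
      (((I : ℕ) : ℤ) + 1 = a ∨ ((I : ℕ) : ℤ) + 1 = -a) →
      ∑ j, μ j * entryVec n (A i j) I = entryVec n a I * W i a := by
    intro i a I j₀ hj₀ hI
    simp only [hWdef]
    rw [Finset.mul_sum]
    refine Finset.sum_congr rfl fun j _ => ?_
    by_cases hj : A i j = a
    · rw [hj, if_pos rfl]; ring
    · rw [if_neg hj, mul_zero]
      have hzz : entryVec n (A i j) I = 0 := by
        apply entryVec_eq_zero
        · intro hc
          rcases hI with hI | hI
          · exact hj (by omega)
          · exact hpair i j j₀ (by omega)
        · intro hc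
          rcases hI with hI | hI
          · exact hpair i j₀ j (by omega)
          · exact hj (by omega)
      rw [hzz, mul_zero]
  have hA0 : ∀ i j, A i j ≠ 0 := by
    intro i j h
    have := (hA i j).1
    rw [h] at this
    simp at this
  obtain ⟨j₀, hj₀⟩ : ∃ j, 0 < μ j := by
    by_contra hc
    push_neg at hc
    have : ∑ j, μ j ≤ 0 := Finset.sum_nonpos fun j _ => hc j
    linarith
  by_cases hb1 : b 1 = 0
  · have hb0 : b 0 ≠ 0 := by
      intro h0
      apply hb
      funext k
      fin_cases k
      · exact h0
      · exact hb1
    obtain ⟨I, hI⟩ := exists_idx (hA 0 j₀).1 (hA 0 j₀).2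
    have hP := hL1 0 (A 0 j₀) I j₀ rfl hI
    have hσ := entryVec_sign (hA0 0 j₀) hI
    have hW := hWpos 0 j₀ hj₀
    have hc := hcoord I
    rw [hP, hb1] at hc
    have h5 : b 0 * W 0 (A 0 j₀) = 0 := by
      rcases hσ with hσ | hσ <;> rw [hσ] at hc
      · linear_combination hc
      · linear_combination -hc
    rcases mul_eq_zero.mp h5 with h | h
    · exact hb0 h
    · linarith
  · by_cases hb0 : b 0 = 0
    · obtain ⟨I, hI⟩ := exists_idx (hA 1 j₀).1 (hA 1 j₀).2
      have hP := hL1 1 (A 1 j₀) I j₀ rfl hI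
      have hσ := entryVec_sign (hA0 1 j₀) hI
      have hW := hWpos 1 j₀ hj₀
      have hc := hcoord I
      rw [hP, hb0] at hc
      have h5 : b 1 * W 1 (A 1 j₀) = 0 := by
        rcases hσ with hσ | hσ <;> rw [hσ] at hc
        · linear_combination hc
        · linear_combination -hc
      rcases mul_eq_zero.mp h5 with h | h
      · exact hb1 h
      · linarith
    · -- main case: both coordinates of b are nonzero
      have hbb : b 0 * b 1 ≠ 0 := mul_ne_zero hb0 hb1
      obtain ⟨ε, hεpm, hεneg, hεpos⟩ :
          ∃ ε : ℤ, (ε = 1 ∨ ε = -1) ∧ (0 < b 0 * b 1 → ε = -1) ∧ (b 0 * b 1 < 0 → ε = 1) := by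
        by_cases hpos : 0 < b 0 * b 1
        · exact ⟨-1, Or.inr rfl, fun _ => rfl, fun h => absurd hpos (by linarith)⟩
        · exact ⟨1, Or.inl rfl, fun h => absurd h hpos, fun _ => rfl⟩
      have hC : ∀ j, 0 < μ j → ∃ j', 0 < μ j' ∧ A 0 j' = ε * A 1 j := by
        intro j hj
        obtain ⟨I, hI1⟩ := exists_idx (hA 1 j).1 (hA 1 j).2
        have hQ := hL1 1 (A 1 j) I j rfl hI1
        have hσ1 := entryVec_sign (hA0 1 j) hI1
        have hW1 : 0 < W 1 (A 1 j) := hWpos 1 j hj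
        have hceq := hcoord I
        obtain ⟨j', hj'⟩ : ∃ j', μ j' * entryVec n (A 0 j') I ≠ 0 := by
          by_contra hcon
          push_neg at hcon
          have h0 : (∑ j'', μ j'' * entryVec n (A 0 j'') I) = 0 :=
            Finset.sum_eq_zero fun j'' _ => hcon j''
          rw [h0, hQ] at hceq
          have h5 : b 1 * W 1 (A 1 j) = 0 := by
            rcases hσ1 with hσ | hσ <;> rw [hσ] at hceq
            · linear_combination hceq
            · linear_combination -hceq
          rcases mul_eq_zero.mp h5 with h | h
          · exact hb1 h
          · linarith
        have hμj' : 0 < μ j' := by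
          rcases (hμ0 j').lt_or_eq with h | h
          · exact h
          · exact absurd (by rw [← h, zero_mul]) hj'
        have he0 : entryVec n (A 0 j') I ≠ 0 := fun h => hj' (by rw [h, mul_zero])
        have hI0 : ((I : ℕ) : ℤ) + 1 = A 0 j' ∨ ((I : ℕ) : ℤ) + 1 = -(A 0 j') := by
          by_contra hcon
          push_neg at hcon
          exact he0 (entryVec_eq_zero hcon.1 hcon.2)
        have hδ : A 0 j' = A 1 j ∨ A 0 j' = -(A 1 j) := by
          rcases hI0 with h | h <;> rcases hI1 with h' | h' <;> omega
        have hP := hL1 0 (A 0 j') I j' rfl hI0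
        have hW0 : 0 < W 0 (A 0 j') := hWpos 0 j' hμj'
        rw [hP, hQ] at hceq
        have h8 : 0 < (b 1 * W 1 (A 1 j)) * (b 1 * W 1 (A 1 j)) :=
          mul_self_pos.mpr (mul_ne_zero hb1 (ne_of_gt hW1))
        rcases hδ with hδ | hδ
        · -- A 0 j' = A 1 j : we show ε = 1
          rw [hδ] at hceq hW0
          have h6 : b 0 * W 0 (A 1 j) = -(b 1 * W 1 (A 1 j)) := by
            rcases hσ1 with hσ | hσ <;> rw [hσ] at hceq
            · linear_combination hceq
            · linear_combination -hceq
          have h7 : (b 0 * b 1) * (W 0 (A 1 j) * W 1 (A 1 j))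
              = -((b 1 * W 1 (A 1 j)) * (b 1 * W 1 (A 1 j))) := by
            calc (b 0 * b 1) * (W 0 (A 1 j) * W 1 (A 1 j))
                = (b 0 * W 0 (A 1 j)) * (b 1 * W 1 (A 1 j)) := by ring
              _ = -((b 1 * W 1 (A 1 j)) * (b 1 * W 1 (A 1 j))) := by rw [h6]; ring
          have h9 : 0 < W 0 (A 1 j) * W 1 (A 1 j) := mul_pos hW0 hW1
          have hlt : b 0 * b 1 < 0 := by nlinarith [h7, h8, h9]
          have hε1 : ε = 1 := hεpos hlt
          exact ⟨j', hμj', by rw [hε1, one_mul, hδ]⟩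
        · -- A 0 j' = -(A 1 j) : we show ε = -1
          rw [hδ] at hceq hW0
          rw [entryVec_neg_apply] at hceq
          have h6 : b 0 * W 0 (-(A 1 j)) = b 1 * W 1 (A 1 j) := by
            rcases hσ1 with hσ | hσ <;> rw [hσ] at hceq
            · linear_combination -hceq
            · linear_combination hceq
          have h7 : (b 0 * b 1) * (W 0 (-(A 1 j)) * W 1 (A 1 j))
              = (b 1 * W 1 (A 1 j)) * (b 1 * W 1 (A 1 j)) := by
            calc (b 0 * b 1) * (W 0 (-(A 1 j)) * W 1 (A 1 j))
                = (b 0 * W 0 (-(A 1 j))) * (b 1 * W 1 (A 1 j)) := by ring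
              _ = (b 1 * W 1 (A 1 j)) * (b 1 * W 1 (A 1 j)) := by rw [h6]
          have h9 : 0 < W 0 (-(A 1 j)) * W 1 (A 1 j) := mul_pos hW0 hW1
          have hgt : 0 < b 0 * b 1 := by nlinarith [h7, h8, h9]
          have hεm : ε = -1 := hεneg hgt
          exact ⟨j', hμj', by rw [hεm, hδ]; ring⟩
      -- build the iteration
      have hC' : ∀ j : Fin (m + 1), ∃ j', 0 < μ j → (0 < μ j' ∧ A 0 j' = ε * A 1 j) := by
        intro j
        by_cases hj : 0 < μ j
        · obtain ⟨j', hj'⟩ := hC j hj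
          exact ⟨j', fun _ => hj'⟩
        · exact ⟨j, fun h => absurd h hj⟩
      choose F hF using hC'
      have hgpos : ∀ k, 0 < μ (F^[k] j₀) := by
        intro k
        induction k with
        | zero => exact hj₀
        | succ k ih =>
          rw [Function.iterate_succ_apply']
          exact (hF (F^[k] j₀) ih).1
      have hgrel : ∀ k, A 0 (F^[k + 1] j₀) = ε * A 1 (F^[k] j₀) := by
        intro k
        rw [Function.iterate_succ_apply']
        exact (hF (F^[k] j₀) (hgpos k)).2
      have hex : ∃ bk, ∃ ak, ak < bk ∧ F^[ak] j₀ = F^[bk] j₀ := by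
        obtain ⟨x, y, hxy, hgxy⟩ :=
          Finite.exists_ne_map_eq_of_infinite (fun k : ℕ => F^[k] j₀)
        rcases hxy.lt_or_gt with h | h
        · exact ⟨y, x, h, hgxy⟩
        · exact ⟨x, y, h, hgxy.symm⟩
      obtain ⟨a, haB, hgaB⟩ := Nat.find_spec hex
      have hdist : ∀ k l, k < l → l < Nat.find hex → F^[k] j₀ ≠ F^[l] j₀ := by
        intro k l hkl hlB hkeq
        exact Nat.find_min hex hlB ⟨k, hkl, hkeq⟩
      set p := Nat.find hex - a - 1 with hp
      have hB : a + p + 1 = Nat.find hex := by omega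
      set jj : Fin (p + 1) → Fin (m + 1) := fun α => F^[a + (α : ℕ)] j₀ with hjj
      have hjinj : Function.Injective jj := by
        intro α β hαβ
        have hαβ' : F^[a + (α : ℕ)] j₀ = F^[a + (β : ℕ)] j₀ := hαβ
        by_contra hne
        have hvne : (α : ℕ) ≠ (β : ℕ) := fun h => hne (Fin.ext h)
        have hα := α.isLt
        have hβ := β.isLt
        rcases hvne.lt_or_gt with h | h
        · exact hdist _ _ (by omega) (by omega) hαβ'
        · exact hdist _ _ (by omega) (by omega) hαβ'.symm
      have hrel2 : ∀ α : Fin (p + 1), A 1 (jj α) = ε * A 0 (jj (α + 1)) := by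
        intro α
        have hα := α.isLt
        have hnext : F^[a + (α : ℕ) + 1] j₀ = jj (α + 1) := by
          by_cases hlast : (α : ℕ) = p
          · have hαl : α = Fin.last p := Fin.ext (by simpa using hlast)
            have hv : ((α + 1 : Fin (p + 1)) : ℕ) = 0 := by
              rw [Fin.val_add_one, if_pos hαl]
            show F^[a + (α : ℕ) + 1] j₀ = F^[a + ((α + 1 : Fin (p + 1)) : ℕ)] j₀
            rw [hv, hlast, hB]
            exact hgaB.symm
          · have hαl : α ≠ Fin.last p := fun h => hlast (by rw [h]; rfl)
            have hv : ((α + 1 : Fin (p + 1)) : ℕ) = (α : ℕ) + 1 := by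
              rw [Fin.val_add_one, if_neg hαl]
            show F^[a + (α : ℕ) + 1] j₀ = F^[a + ((α + 1 : Fin (p + 1)) : ℕ)] j₀
            rw [hv]
            exact congrArg (fun t => F^[t] j₀) (by omega)
        have hstep := hgrel (a + (α : ℕ))
        rw [hnext] at hstep
        have hjα : F^[a + (α : ℕ)] j₀ = jj α := rfl
        rw [hjα] at hstep
        rcases hεpm with hε | hε <;> rw [hε] at hstep ⊢ <;> omega
      rcases hεpm with hε | hε
      · refine h2 ⟨0, 1, by decide, p, jj, hjinj, fun α => ?_⟩
        have := hrel2 α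
        rw [hε] at this
        omega
      · refine h3 ⟨0, 1, by decide, p, jj, hjinj, fun α => ?_⟩
        have := hrel2 α
        rw [hε] at this
        omega

/-- a `2 × (m+1)` matrix with entries in `{±1,…,±n}` and distinct
columns is invalid if and only if (1) one of its rows contains both `α` and `−α` for
some `α ∈ {1,…,n}`, or (2) it contains a circuit or an anti-circuit. -/
theorem stmt12 (n m : ℕ) (A : Fin 2 → Fin (m + 1) → ℤ)
    (hA : ∀ i j, 1 ≤ |A i j| ∧ |A i j| ≤ (n : ℤ))
    (hcol : Function.Injective (fun j => fun i => A i j)) :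
    ¬ IsValid n m A ↔
      ((∃ i : Fin 2, ∃ j₁ j₂ : Fin (m + 1), A i j₁ = -(A i j₂)) ∨
        HasCircuit A ∨ HasAntiCircuit A) := by
  constructor
  · intro hnv
    by_contra hR
    push_neg at hR
    obtain ⟨h1, h2, h3⟩ := hR
    exact hnv (isValid_of_no_pattern hA h1 h2 h3)
  · rintro (⟨i, j₁, j₂, h⟩ | ⟨i₀, i₁, hne, p, j, hinj, hrel⟩ | ⟨i₀, i₁, hne, p, j, hinj, hrel⟩)
    · exact notValid_row i j₁ j₂ h
    · exact notValid_cyc i₀ i₁ hne (Or.inl rfl) p j (fun α => by rw [hrel α, one_mul])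
    · exact notValid_cyc i₀ i₁ hne (Or.inr rfl) p j (fun α => by rw [hrel α]; ring)
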